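/- For N ≥ 2, the spectrum of the matrix C_N^quant with entries 1/sin(π(m+n-1)/N) (and 0 where sin(π(m+n-1)/N) = 0, i.e. on the anti-diagonal shifted appropriately) is exactly {N-1, N-3, ..., 3-N, 1-N}, the set of integers n with |n| < N and n ≡ N-1 (mod 2). -/

import Mathlib

open Finset Real Matrix

namespace QSH

noncomputable def th (N : ℕ) (j : ℤ) : ℂ := Complex.exp (Real.pi * Complex.I * j / N)

lemma th_add (N : ℕ) (a b : ℤ) : th N (a + b) = th N a * th N b := by
  rw [th, th, th, ← Complex.exp_add]
  congr 1
  push_cast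
  ring

lemma th_ne_zero (N : ℕ) (j : ℤ) : th N j ≠ 0 := Complex.exp_ne_zero _

lemma th_neg (N : ℕ) (j : ℤ) : th N (-j) = (th N j)⁻¹ := by
  rw [inv_eq_one_div, eq_div_iff (th_ne_zero N j), ← th_add]
  simp [th]

lemma th_zero (N : ℕ) : th N 0 = 1 := by simp [th]

lemma th_intCast_mul (N : ℕ) (k j : ℤ) : th N (k * j) = th N j ^ k := by
  rw [th, th, ← Complex.exp_int_mul]
  congr 1
  push_cast
  ring

lemma th_nat_mul (N : ℕ) (k : ℕ) (j : ℤ) : th N ((k : ℤ) * j) = th N j ^ k := by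
  rw [th_intCast_mul, zpow_natCast]

lemma th_self (N : ℕ) (hN : 0 < N) : th N N = -1 := by
  rw [th, ← Complex.exp_pi_mul_I]
  congr 1
  have : (N : ℂ) ≠ 0 := Nat.cast_ne_zero.2 hN.ne'
  field_simp
  simp

lemma th_two_mul_eq_one_iff (N : ℕ) (hN : 0 < N) (j : ℤ) :
    th N (2 * j) = 1 ↔ (N : ℤ) ∣ j := by
  rw [th, Complex.exp_eq_one_iff]
  have hπ : (Real.pi : ℂ) ≠ 0 := by
    exact_mod_cast Real.pi_ne_zero
  have hNC : (N : ℂ) ≠ 0 := Nat.cast_ne_zero.2 hN.ne'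
  constructor
  · rintro ⟨k, hk⟩
    refine ⟨k, ?_⟩
    have : (j : ℂ) = (k : ℂ) * N := by
      field_simp at hk
      have hI : (Complex.I : ℂ) ≠ 0 := Complex.I_ne_zero
      push_cast at hk ⊢
      apply mul_left_cancel₀ (mul_ne_zero hπ hI)
      linear_combination ((π:ℂ) * Complex.I) * hk / 2
    have h2 : (j : ℂ) = ((N * k : ℤ) : ℂ) := by push_cast; rw [this]; ring
    exact_mod_cast h2
  · rintro ⟨k, rfl⟩
    refine ⟨k, ?_⟩
    push_cast
    field_simp


noncomputable def a (N : ℕ) (j : ℤ) : ℂ :=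
  if (N : ℤ) ∣ j then 0 else 2 * Complex.I / (th N j - th N (-j))

lemma sin_pi_div_eq_zero_iff (N : ℕ) (hN : 0 < N) (j : ℕ) :
    Real.sin (Real.pi * j / N) = 0 ↔ (N : ℤ) ∣ (j : ℤ) := by
  rw [Real.sin_eq_zero_iff]
  have hNR : (N : ℝ) ≠ 0 := Nat.cast_ne_zero.2 hN.ne'
  constructor
  · rintro ⟨n, hn⟩
    refine ⟨n, ?_⟩
    have h2 : Real.pi * ((n : ℝ) * N) = Real.pi * j := by
      rw [eq_div_iff hNR] at hn
      · nlinarith [hn]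
    have h3 : (j : ℝ) = (N : ℝ) * n := by
      have := mul_left_cancel₀ Real.pi_ne_zero h2
      linarith
    exact_mod_cast h3
  · rintro ⟨n, hn⟩
    refine ⟨n, ?_⟩
    have h3 : (j : ℝ) = (N : ℝ) * n := by exact_mod_cast congrArg (fun z : ℤ => (z : ℝ)) hn
    rw [h3]
    field_simp

lemma th_sub_th_neg (N : ℕ) (j : ℕ) :
    th N j - th N (-(j:ℤ)) = 2 * Complex.I * Complex.sin (Real.pi * j / N) := by
  rw [th, th, Complex.sin]
  have h1 : (Real.pi : ℂ) * Complex.I * (((j:ℕ) : ℤ) : ℂ) / (N : ℂ)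
      = ((Real.pi : ℂ) * (j:ℕ) / (N:ℕ)) * Complex.I := by push_cast; ring
  have h2 : (Real.pi : ℂ) * Complex.I * ((-(j:ℤ) : ℤ) : ℂ) / (N : ℂ)
      = -((Real.pi : ℂ) * (j:ℕ) / (N:ℕ)) * Complex.I := by push_cast; ring
  rw [h1, h2]
  linear_combination (Complex.exp (((Real.pi:ℂ) * (j:ℕ) / (N:ℕ)) * Complex.I)
    - Complex.exp (-((Real.pi:ℂ) * (j:ℕ) / (N:ℕ)) * Complex.I)) * Complex.I_sq

lemma entry_cast (N : ℕ) (hN : 0 < N) (j : ℕ) :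
    ((if Real.sin (Real.pi * j / N) = 0 then (0:ℝ) else 1 / Real.sin (Real.pi * j / N)) : ℂ)
      = a N j := by
  rw [a]
  by_cases h : Real.sin (Real.pi * j / N) = 0
  · rw [if_pos h, if_pos ((sin_pi_div_eq_zero_iff N hN j).1 h)]
    simp
  · rw [if_neg h, if_neg (fun hd => h ((sin_pi_div_eq_zero_iff N hN j).2 hd)),
      th_sub_th_neg]
    have hs : (Real.sin (Real.pi * j / N) : ℂ) = Complex.sin ((Real.pi:ℂ) * j / N) := by
      rw [Complex.ofReal_sin]
      congr 1
      push_cast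
      ring
    have hsn : Complex.sin ((Real.pi:ℂ) * j / N) ≠ 0 := by
      rw [← hs]
      exact_mod_cast h
    push_cast
    field_simp


noncomputable def F (N l : ℕ) (j : ℤ) : ℂ := a N j * th N ((2*(l:ℤ)+1)*j)

noncomputable def A (N l : ℕ) (j : ℤ) : ℂ :=
  a N j * (th N ((2*(l:ℤ)+1)*j) + th N (-((2*(l:ℤ)+1)*j))) / 2

noncomputable def D (N l : ℕ) (j : ℤ) : ℂ :=
  if (N : ℤ) ∣ j then 0 else ∑ t ∈ Finset.range (2*l+1), th N (2*j*((t:ℤ)-l))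

lemma int_dvd_small (M x : ℤ) (h : 0 < M) (hd : M ∣ x) (h1 : -M < x) (h2 : x < M) : x = 0 := by
  obtain ⟨k, rfl⟩ := hd
  have hk : k = 0 := by
    by_contra hk0
    have : 1 ≤ k ∨ k ≤ -1 := by omega
    rcases this with h3 | h3
    · nlinarith
    · nlinarith
  rw [hk, mul_zero]

lemma den_ne_zero (N : ℕ) (hN : 0 < N) (j : ℤ) (hd : ¬ (N:ℤ) ∣ j) :
    th N j - th N (-j) ≠ 0 := by
  intro h0
  apply hd
  rw [← th_two_mul_eq_one_iff N hN]
  have h1 : th N j = (th N j)⁻¹ := by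
    rw [← th_neg]
    linear_combination h0
  have : th N (2*j) = th N j * th N j := by
    rw [show (2*j : ℤ) = j + j by ring, th_add]
  rw [this]
  nth_rewrite 1 [h1]
  exact inv_mul_cancel₀ (th_ne_zero N j)

lemma F_decomp (N l : ℕ) (hN : 0 < N) (j : ℤ) :
    F N l j = A N l j + Complex.I * D N l j := by
  by_cases hd : (N : ℤ) ∣ j
  · simp [F, A, D, a, hd]
  · set s := th N j with hs
    have hs0 : s ≠ 0 := th_ne_zero N j
    have hden : s - s⁻¹ ≠ 0 := by
      rw [hs, ← th_neg]
      exact den_ne_zero N hN j hd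
    have hp : th N ((2*(l:ℤ)+1)*j) = s ^ ((2*(l:ℤ)+1)) := th_intCast_mul N _ j
    have hpn : th N (-((2*(l:ℤ)+1)*j)) = s ^ (-(2*(l:ℤ)+1)) := by
      rw [th_neg, hp, ← _root_.zpow_neg]
    have hterm : ∀ t : ℕ, (s - s⁻¹) * th N (2*j*((t:ℤ)-l))
        = s ^ (2*(((t+1:ℕ)):ℤ) - 2*l - 1) - s ^ (2*(t:ℤ) - 2*l - 1) := by
      intro t
      have h1 : th N (2*j*((t:ℤ)-l)) = s ^ (2*((t:ℤ)-l)) := by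
        rw [show (2*j*((t:ℤ)-l) : ℤ) = (2*((t:ℤ)-l)) * j by ring, th_intCast_mul]
      rw [h1, show (2*(((t+1:ℕ)):ℤ) - 2*l - 1 : ℤ) = 2*((t:ℤ)-l) + 1 by push_cast; ring,
        show (2*(t:ℤ) - 2*l - 1 : ℤ) = 2*((t:ℤ)-l) + (-1) by ring,
        zpow_add₀ hs0, zpow_add₀ hs0]
      field_simp
    have htel : (s - s⁻¹) * (∑ t ∈ Finset.range (2*l+1), th N (2*j*((t:ℤ)-l)))
        = s ^ (2*(l:ℤ)+1) - s ^ (-(2*(l:ℤ)+1)) := by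
      rw [Finset.mul_sum]
      rw [Finset.sum_congr rfl (fun t _ => hterm t)]
      rw [Finset.sum_range_sub (fun t : ℕ => s ^ (2*(t:ℤ) - 2*l - 1))]
      congr 2 <;> push_cast <;> ring
    rw [F, A, D, if_neg hd, a, if_neg hd, hp, hpn, ← hs, th_neg, ← hs]
    set P := s ^ (2*(l:ℤ)+1) with hP
    have hP0 : P ≠ 0 := zpow_ne_zero _ hs0
    rw [_root_.zpow_neg, ← hP] at htel ⊢
    have hS : (∑ t ∈ Finset.range (2*l+1), th N (2*j*((t:ℤ)-l))) = (P - P⁻¹)/(s - s⁻¹) := by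
      rw [eq_div_iff hden]
      linear_combination htel
    have h2 : s^2 - 1 ≠ 0 := by
      intro h0
      apply hden
      have : s * (s - s⁻¹) = s^2 - 1 := by field_simp
      have h3 : s * (s - s⁻¹) = 0 := by rw [this, h0]
      rcases mul_eq_zero.1 h3 with h | h
      · exact absurd h hs0
      · exact h
    rw [hS]
    ring


lemma th_shift_N (N : ℕ) (hN : 0 < N) (x : ℤ) : th N (x + N) = - th N x := by
  rw [th_add, th_self N hN]; ring

lemma th_sub_N (N : ℕ) (hN : 0 < N) (x : ℤ) : th N (x - N) = - th N x := by
  rw [show x - (N:ℤ) = x + (-(N:ℤ)) by ring, th_add, th_neg, th_self N hN]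
  norm_num

lemma dvd_add_N (N : ℕ) (j : ℤ) : (N:ℤ) ∣ j + N ↔ (N:ℤ) ∣ j :=
  ⟨fun h => by simpa using dvd_sub h (dvd_refl (N:ℤ)), fun h => dvd_add h (dvd_refl _)⟩

lemma dvd_sub_N (N : ℕ) (j : ℤ) : (N:ℤ) ∣ (N:ℤ) - j ↔ (N:ℤ) ∣ j := by
  constructor
  · intro h
    have := dvd_sub (dvd_refl (N:ℤ)) h
    simpa using this
  · intro h
    exact dvd_sub (dvd_refl _) h

lemma a_add_self (N : ℕ) (hN : 0 < N) (j : ℤ) : a N (j + N) = - a N j := by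
  rw [a, a]
  by_cases hd : (N:ℤ) ∣ j
  · rw [if_pos ((dvd_add_N N j).2 hd), if_pos hd]; ring
  · rw [if_neg (fun h => hd ((dvd_add_N N j).1 h)), if_neg hd]
    rw [show -(j + (N:ℤ)) = -j - N by ring, th_shift_N N hN, th_sub_N N hN]
    rw [show -th N j - -th N (-j) = -(th N j - th N (-j)) by ring, div_neg]

lemma a_reflect (N : ℕ) (hN : 0 < N) (j : ℤ) : a N ((N:ℤ) - j) = a N j := by
  rw [a, a]
  by_cases hd : (N:ℤ) ∣ j
  · rw [if_pos ((dvd_sub_N N j).2 hd), if_pos hd]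
  · rw [if_neg (fun h => hd ((dvd_sub_N N j).1 h)), if_neg hd]
    rw [show (N:ℤ) - j = -j + N by ring, th_shift_N N hN,
      show -(-j + (N:ℤ)) = j - N by ring, th_sub_N N hN]
    congr 1
    ring

lemma F_per (N l : ℕ) (hN : 0 < N) (j : ℤ) : F N l (j + N) = F N l j := by
  rw [F, F, a_add_self N hN]
  have h1 : th N ((2*(l:ℤ)+1)*(j+N)) = - th N ((2*(l:ℤ)+1)*j) := by
    rw [show (2*(l:ℤ)+1)*(j+N) = (2*(l:ℤ)+1)*j + ((2*l+1 : ℕ):ℤ) * N by push_cast; ring,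
      th_add, th_nat_mul, th_self N hN]
    have : ((-1 : ℂ)) ^ (2*l+1) = -1 := Odd.neg_one_pow ⟨l, by ring⟩
    rw [this]; ring
  rw [h1]; ring

lemma A_zero (N l : ℕ) : A N l 0 = 0 := by simp [A, a]

lemma A_reflect (N l : ℕ) (hN : 0 < N) (j : ℤ) : A N l ((N:ℤ) - j) = - A N l j := by
  rw [A, A, a_reflect N hN]
  have hodd : ((-1 : ℂ)) ^ (2*l+1) = -1 := Odd.neg_one_pow ⟨l, by ring⟩
  have h1 : th N ((2*(l:ℤ)+1)*((N:ℤ)-j)) = - th N (-((2*(l:ℤ)+1)*j)) := by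
    rw [show (2*(l:ℤ)+1)*((N:ℤ)-j) = -((2*(l:ℤ)+1)*j) + ((2*l+1 : ℕ):ℤ) * N by push_cast; ring,
      th_add, th_nat_mul, th_self N hN, hodd]
    ring
  have h2 : th N (-((2*(l:ℤ)+1)*((N:ℤ)-j))) = - th N ((2*(l:ℤ)+1)*j) := by
    rw [show -((2*(l:ℤ)+1)*((N:ℤ)-j)) = (2*(l:ℤ)+1)*j + (-(((2*l+1 : ℕ):ℤ) * N)) by push_cast; ring,
      th_add, th_neg, th_nat_mul, th_self N hN, hodd]
    norm_num
  rw [h1, h2]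
  ring

lemma sum_A (N l : ℕ) (hN : 0 < N) : ∑ j ∈ Finset.range N, A N l (j:ℤ) = 0 := by
  set S := ∑ j ∈ Finset.range N, A N l (j:ℤ) with hS
  have hN0 : A N l ((N:ℕ):ℤ) = 0 := by
    rw [show ((N:ℕ):ℤ) = (N:ℤ) - 0 by ring, A_reflect N l hN, A_zero]
    ring
  have e1 : ∑ j ∈ Finset.range (N+1), A N l (j:ℤ) = S + A N l ((N:ℕ):ℤ) :=
    Finset.sum_range_succ _ N
  have e2 : ∑ j ∈ Finset.range (N+1), A N l (j:ℤ)
      = (∑ j ∈ Finset.range N, A N l (((j+1 : ℕ)):ℤ)) + A N l ((0:ℕ):ℤ) :=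
    Finset.sum_range_succ' _ N
  have e3 : (∑ j ∈ Finset.range N, A N l (((j+1 : ℕ)):ℤ)) = S := by
    have h := e2.symm.trans e1
    simp only [Nat.cast_zero, A_zero, add_zero, hN0] at h
    exact h
  have e4 : (∑ j ∈ Finset.range N, A N l (((j+1 : ℕ)):ℤ)) = -S := by
    rw [← Finset.sum_range_reflect (fun j => A N l (((j+1 : ℕ)):ℤ)) N]
    rw [hS, ← Finset.sum_neg_distrib]
    apply Finset.sum_congr rfl
    intro j hj
    have hjN : j < N := Finset.mem_range.1 hj
    have hcast : (((N - 1 - j + 1 : ℕ)):ℤ) = (N:ℤ) - j := by omega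
    rw [hcast, A_reflect N l hN]
  have h5 : S = -S := e3.symm.trans e4
  linear_combination h5 / 2


lemma not_dvd_of_lt (N j : ℕ) (h0 : j ≠ 0) (hj : j < N) : ¬ (N:ℤ) ∣ (j:ℤ) := by
  intro h
  have h2 : N ∣ j := Int.ofNat_dvd.mp h
  have := Nat.le_of_dvd (Nat.pos_of_ne_zero h0) h2
  omega

lemma sum_D (N l : ℕ) (hN : 0 < N) (hl : l < N) :
    ∑ j ∈ Finset.range N, D N l (j:ℤ) = (N:ℂ) - (2*l+1) := by
  have hDj : ∀ j ∈ Finset.range N, D N l (j:ℤ)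
      = (∑ t ∈ Finset.range (2*l+1), th N (2*(j:ℤ)*((t:ℤ)-l)))
        - (if j = 0 then ((2*l+1 : ℕ):ℂ) else 0) := by
    intro j hj
    by_cases h0 : j = 0
    · subst h0
      rw [D, if_pos (by simp)]
      have : ∀ t ∈ Finset.range (2*l+1), th N (2*((0:ℕ):ℤ)*((t:ℤ)-l)) = 1 := by
        intro t _
        rw [show (2*((0:ℕ):ℤ)*((t:ℤ)-l)) = 0 by push_cast; ring, th_zero]
      rw [Finset.sum_congr rfl this]
      simp
    · rw [D, if_neg (not_dvd_of_lt N j h0 (Finset.mem_range.1 hj)), if_neg h0]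
      ring
  rw [Finset.sum_congr rfl hDj, Finset.sum_sub_distrib]
  have hif : ∑ j ∈ Finset.range N, (if j = 0 then ((2*l+1 : ℕ):ℂ) else 0)
      = ((2*l+1 : ℕ):ℂ) := by
    rw [Finset.sum_ite_eq' (Finset.range N) 0 (fun _ => ((2*l+1 : ℕ):ℂ))]
    rw [if_pos (Finset.mem_range.2 hN)]
  have hmain : ∑ j ∈ Finset.range N, (∑ t ∈ Finset.range (2*l+1), th N (2*(j:ℤ)*((t:ℤ)-l)))
      = (N:ℂ) := by
    rw [Finset.sum_comm]
    have hinner : ∀ t ∈ Finset.range (2*l+1),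
        (∑ j ∈ Finset.range N, th N (2*(j:ℤ)*((t:ℤ)-l)))
          = (if t = l then (N:ℂ) else 0) := by
      intro t ht
      have hpow : ∀ j : ℕ, th N (2*(j:ℤ)*((t:ℤ)-l)) = (th N (2*((t:ℤ)-l))) ^ j := by
        intro j
        rw [show (2*(j:ℤ)*((t:ℤ)-l)) = (j:ℤ) * (2*((t:ℤ)-l)) by ring, th_nat_mul]
      rw [Finset.sum_congr rfl (fun j _ => hpow j)]
      by_cases hteq : t = l
      · subst hteq
        rw [if_pos rfl, show (2*((t:ℤ)-t)) = 0 by ring, th_zero]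
        simp
      · rw [if_neg hteq]
        set r := th N (2*((t:ℤ)-l)) with hr
        have hr1 : r ≠ 1 := by
          intro h1
          apply hteq
          have hdvd := (th_two_mul_eq_one_iff N hN ((t:ℤ)-l)).1 h1
          have htlt : (t:ℤ) - l < N := by
            have := Finset.mem_range.1 ht
            omega
          have htgt : -(N:ℤ) < (t:ℤ) - l := by omega
          have := int_dvd_small (N:ℤ) ((t:ℤ)-l) (by exact_mod_cast hN) hdvd htgt htlt
          omega
        rw [geom_sum_eq hr1]
        have hrN : r ^ N = 1 := by
          rw [hr, ← th_nat_mul, show ((N:ℕ):ℤ) * (2*((t:ℤ)-l)) = 2*((N:ℤ)*((t:ℤ)-l)) by ring]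
          exact (th_two_mul_eq_one_iff N hN _).2 ⟨(t:ℤ)-l, rfl⟩
        rw [hrN]
        simp
    rw [Finset.sum_congr rfl hinner]
    rw [Finset.sum_ite_eq' (Finset.range (2*l+1)) l (fun _ => (N:ℂ))]
    rw [if_pos (Finset.mem_range.2 (by omega))]
  rw [hmain, hif]
  push_cast
  ring

lemma sum_shift (N : ℕ) (f : ℤ → ℂ) (hf : ∀ j : ℤ, f (j + N) = f j) :
    ∀ c : ℕ, ∑ n ∈ Finset.range N, f ((c:ℤ) + n) = ∑ n ∈ Finset.range N, f (n:ℤ) := by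
  intro c
  induction c with
  | zero => simp
  | succ c ih =>
    have key : ∑ n ∈ Finset.range N, f ((c:ℤ) + ((n+1 : ℕ):ℤ))
        = ∑ n ∈ Finset.range N, f ((c:ℤ) + (n:ℤ)) := by
      have e1 : ∑ n ∈ Finset.range (N+1), f ((c:ℤ) + (n:ℤ))
          = (∑ n ∈ Finset.range N, f ((c:ℤ) + ((n+1 : ℕ):ℤ))) + f ((c:ℤ) + ((0:ℕ):ℤ)) :=
        Finset.sum_range_succ' _ N
      have e2 : ∑ n ∈ Finset.range (N+1), f ((c:ℤ) + (n:ℤ))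
          = (∑ n ∈ Finset.range N, f ((c:ℤ) + (n:ℤ))) + f ((c:ℤ) + ((N:ℕ):ℤ)) :=
        Finset.sum_range_succ _ N
      have e3 : f ((c:ℤ) + ((N:ℕ):ℤ)) = f ((c:ℤ) + ((0:ℕ):ℤ)) := by
        push_cast
        rw [show (c:ℤ) + 0 = (c:ℤ) by ring]
        exact hf (c:ℤ)
      have h := e1.symm.trans e2
      rw [e3] at h
      exact (add_right_cancel h)
    calc ∑ n ∈ Finset.range N, f (((c+1 : ℕ):ℤ) + (n:ℤ))
        = ∑ n ∈ Finset.range N, f ((c:ℤ) + ((n+1 : ℕ):ℤ)) := by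
          apply Finset.sum_congr rfl
          intro n _
          congr 1
          push_cast
          ring
      _ = ∑ n ∈ Finset.range N, f ((c:ℤ) + (n:ℤ)) := key
      _ = ∑ n ∈ Finset.range N, f (n:ℤ) := ih

lemma F_window (N l : ℕ) (hN : 0 < N) (hl : l < N) (m : ℕ) :
    ∑ n ∈ Finset.range N, F N l ((m:ℤ) + (n:ℤ) + 1) = ((N:ℂ) - (2*(l:ℂ)+1)) * Complex.I := by
  have h1 : ∑ n ∈ Finset.range N, F N l ((m:ℤ) + (n:ℤ) + 1)
      = ∑ n ∈ Finset.range N, F N l (((m+1 : ℕ):ℤ) + (n:ℤ)) := by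
    apply Finset.sum_congr rfl
    intro n _
    congr 1
    push_cast
    ring
  rw [h1, sum_shift N (F N l) (F_per N l hN) (m+1)]
  have h2 : ∀ j ∈ Finset.range N, F N l (j:ℤ) = A N l (j:ℤ) + Complex.I * D N l (j:ℤ) :=
    fun j _ => F_decomp N l hN (j:ℤ)
  rw [Finset.sum_congr rfl h2, Finset.sum_add_distrib, sum_A N l hN, ← Finset.mul_sum,
    sum_D N l hN hl]
  push_cast
  ring


noncomputable def w (N l : ℕ) : Fin N → ℝ :=
  fun n => Real.cos (Real.pi*(2*l+1)*(2*(n:ℕ)+1)/(2*N) - Real.pi/4)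

lemma eigen_eq (N l : ℕ) (hN : 2 ≤ N) (hl : l < N)
    (C : Matrix (Fin N) (Fin N) ℝ)
    (hC : ∀ m n : Fin N, C m n =
      if Real.sin (Real.pi * ((m : ℕ) + (n : ℕ) + 1) / N) = 0 then 0
      else 1 / Real.sin (Real.pi * ((m : ℕ) + (n : ℕ) + 1) / N)) (m : Fin N) :
    C.mulVec (w N l) m = ((N:ℝ) - (2*l+1)) * w N l m := by
  have hN0 : 0 < N := by omega
  have hNC : (N : ℂ) ≠ 0 := Nat.cast_ne_zero.2 hN0.ne'
  set β : ℝ := -(Real.pi*(2*l+1)*(2*(m:ℕ)+1)/(2*N)) - Real.pi/4 with hβ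
  set E : ℂ := Complex.exp (β * Complex.I) with hE
  have hterm : ∀ n : Fin N, C m n * w N l n
      = (E * F N l ((m:ℕ) + (n:ℕ) + 1)).re := by
    intro n
    have hent : ((C m n : ℝ) : ℂ) = a N (((m:ℕ) + (n:ℕ) + 1 : ℕ)) := by
      rw [hC m n]
      have h1 := entry_cast N hN0 ((m:ℕ) + (n:ℕ) + 1)
      have h2 : Real.pi * (((m:ℕ) : ℝ) + ((n:ℕ) : ℝ) + 1) / N
          = Real.pi * (((m:ℕ) + (n:ℕ) + 1 : ℕ) : ℝ) / N := by push_cast; ring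
      rw [h2, apply_ite (fun r : ℝ => (r : ℂ))]
      push_cast
      push_cast at h1
      exact h1
    have hexp : Complex.exp ((Real.pi*(2*l+1)*(2*(n:ℕ)+1)/(2*N) - Real.pi/4 : ℝ) * Complex.I)
        = E * th N ((2*(l:ℤ)+1)*(((m:ℕ) + (n:ℕ) + 1 : ℕ) : ℤ)) := by
      rw [hE, th, ← Complex.exp_add]
      congr 1
      rw [hβ]
      push_cast
      field_simp
      ring
    have hre : C m n * w N l n
        = (((C m n : ℝ) : ℂ) * Complex.exp
            ((Real.pi*(2*l+1)*(2*(n:ℕ)+1)/(2*N) - Real.pi/4 : ℝ) * Complex.I)).re := by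
      rw [Complex.re_ofReal_mul, Complex.exp_ofReal_mul_I_re]
      rfl
    rw [hre, hent, hexp, F]
    congr 1
    have : (((m:ℕ) + (n:ℕ) + 1 : ℕ) : ℤ) = ((m:ℕ) : ℤ) + ((n:ℕ) : ℤ) + 1 := by push_cast; ring
    rw [this]
    ring
  have hsum : C.mulVec (w N l) m
      = (E * ∑ k ∈ Finset.range N, F N l ((m:ℕ) + (k:ℤ) + 1)).re := by
    rw [Matrix.mulVec, dotProduct]
    rw [Finset.sum_congr rfl (fun n _ => hterm n)]
    rw [← Complex.re_sum, Finset.mul_sum]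
    congr 1
    rw [← Fin.sum_univ_eq_sum_range (fun k : ℕ => E * F N l ((m:ℕ) + (k:ℤ) + 1)) N]
  rw [hsum, F_window N l hN0 hl (m:ℕ)]
  have hlam : ((N:ℂ) - (2*(l:ℂ)+1)) = (((N:ℝ) - (2*l+1) : ℝ) : ℂ) := by push_cast; ring
  rw [hlam]
  rw [show E * ((((N:ℝ) - (2*l+1) : ℝ) : ℂ) * Complex.I)
      = (((N:ℝ) - (2*l+1) : ℝ) : ℂ) * (E * Complex.I) by ring]
  rw [Complex.re_ofReal_mul, Complex.mul_I_re, hE, Complex.exp_ofReal_mul_I_im]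
  congr 1
  rw [hβ, w]
  set c : ℝ := Real.pi*(2*l+1)*(2*(m:ℕ)+1)/(2*N) with hc
  rw [show -c - Real.pi/4 = -(c + Real.pi/4) by ring, Real.sin_neg, neg_neg,
    Real.sin_add, Real.cos_sub, Real.sin_pi_div_four, Real.cos_pi_div_four]
  ring


lemma w_ne_zero (N l : ℕ) (hN : 2 ≤ N) (hl : l < N) : w N l ≠ 0 := by
  intro hw
  have hNR : (N:ℝ) ≠ 0 := Nat.cast_ne_zero.2 (by omega)
  have hNZ : (N:ℤ) ≠ 0 := by exact_mod_cast (Nat.cast_ne_zero.2 (by omega : N ≠ 0) : ((N:ℤ) ≠ 0))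
  have h0 : w N l ⟨0, by omega⟩ = 0 := by rw [hw]; rfl
  have h1 : w N l ⟨1, by omega⟩ = 0 := by rw [hw]; rfl
  rw [w] at h0 h1
  simp only [Real.cos_eq_zero_iff] at h0 h1
  obtain ⟨k1, hk1⟩ := h0
  obtain ⟨k2, hk2⟩ := h1
  have e1 : Real.pi * (2*(N:ℝ)*(2*(k1:ℝ)+1)) = Real.pi * (2*(2*(l:ℝ)+1) - N) := by
    field_simp at hk1
    linear_combination (-π/2 : ℝ) * hk1
  have e2 : Real.pi * (2*(N:ℝ)*(2*(k2:ℝ)+1)) = Real.pi * (6*(2*(l:ℝ)+1) - N) := by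
    field_simp at hk2
    linear_combination (-π/2 : ℝ) * hk2
  have e1' := mul_left_cancel₀ Real.pi_ne_zero e1
  have e2' := mul_left_cancel₀ Real.pi_ne_zero e2
  have e1int : 2*(N:ℤ)*(2*k1+1) = 2*(2*(l:ℤ)+1) - N := by exact_mod_cast e1'
  have e2int : 2*(N:ℤ)*(2*k2+1) = 6*(2*(l:ℤ)+1) - N := by exact_mod_cast e2'
  have f1 : (N:ℤ)*(4*k1+3) = 4*l+2 := by linear_combination e1int
  have f2 : (N:ℤ)*(4*k2+3) = 12*l+6 := by linear_combination e2int
  have f3 : (N:ℤ)*(12*k1+9) = (N:ℤ)*(4*k2+3) := by linear_combination 3*f1 - f2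
  have := mul_left_cancel₀ hNZ f3
  omega

lemma mem_spec (N l : ℕ) (hN : 2 ≤ N) (hl : l < N)
    (C : Matrix (Fin N) (Fin N) ℝ)
    (hC : ∀ m n : Fin N, C m n =
      if Real.sin (Real.pi * ((m : ℕ) + (n : ℕ) + 1) / N) = 0 then 0
      else 1 / Real.sin (Real.pi * ((m : ℕ) + (n : ℕ) + 1) / N)) :
    Module.End.HasEigenvector (Matrix.toLinAlgEquiv' C) ((N:ℝ) - (2*l+1)) (w N l) := by
  constructor
  · rw [Module.End.mem_eigenspace_iff, Matrix.toLinAlgEquiv'_apply]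
    funext m
    exact eigen_eq N l hN hl C hC m
  · exact w_ne_zero N l hN hl

lemma spec_iff (N : ℕ) (hN : 2 ≤ N)
    (C : Matrix (Fin N) (Fin N) ℝ)
    (hC : ∀ m n : Fin N, C m n =
      if Real.sin (Real.pi * ((m : ℕ) + (n : ℕ) + 1) / N) = 0 then 0
      else 1 / Real.sin (Real.pi * ((m : ℕ) + (n : ℕ) + 1) / N)) (x : ℝ) :
    x ∈ spectrum ℝ C ↔ ∃ l : ℕ, l < N ∧ x = (N:ℝ) - (2*l+1) := by
  rw [← AlgEquiv.spectrum_eq (Matrix.toLinAlgEquiv' (n := Fin N) (R := ℝ)) C,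
    ← Module.End.hasEigenvalue_iff_mem_spectrum]
  constructor
  · intro hx
    by_contra hcon
    push_neg at hcon
    obtain ⟨v0, hv0⟩ := hx.exists_hasEigenvector
    set μ : Option (Fin N) → ℝ := fun o => o.elim x (fun l => (N:ℝ) - (2*(l:ℕ)+1)) with hμ
    set vv : Option (Fin N) → (Fin N → ℝ) := fun o => o.elim v0 (fun l => w N (l:ℕ)) with hvv
    have hinj : Function.Injective μ := by
      intro o1 o2 h
      match o1, o2 with
      | Option.none, Option.none => rfl
      | Option.none, Option.some l2 =>
        exact absurd (by simpa [hμ] using h) (hcon (l2:ℕ) l2.isLt)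
      | Option.some l1, Option.none =>
        exact absurd (by simpa [hμ] using h.symm) (hcon (l1:ℕ) l1.isLt)
      | Option.some l1, Option.some l2 =>
        simp only [hμ, Option.elim] at h
        have : (l1:ℕ) = (l2:ℕ) := by
          have : ((l1:ℕ):ℝ) = ((l2:ℕ):ℝ) := by linarith
          exact_mod_cast this
        exact congrArg Option.some (Fin.val_injective this)
    have hvec : ∀ o, Module.End.HasEigenvector (Matrix.toLinAlgEquiv' C) (μ o) (vv o) := by
      intro o
      match o with
      | Option.none => exact hv0
      | Option.some l => exact mem_spec N (l:ℕ) hN l.isLt C hC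
    have hli := Module.End.eigenvectors_linearIndependent' (Matrix.toLinAlgEquiv' C) μ hinj vv hvec
    have hcard := hli.fintype_card_le_finrank
    rw [Module.finrank_fintype_fun_eq_card] at hcard
    simp [Fintype.card_option] at hcard
  · rintro ⟨l, hl, rfl⟩
    exact Module.End.hasEigenvalue_of_hasEigenvector (mem_spec N l hN hl C hC)

end QSH

open QSH in
theorem spectrum_quant_symmetric_hilbert (N : ℕ) (hN : 2 ≤ N)
    (C : Matrix (Fin N) (Fin N) ℝ)
    (hC : ∀ m n : Fin N, C m n =
      if Real.sin (π * ((m : ℕ) + (n : ℕ) + 1) / N) = 0 then 0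
      else 1 / Real.sin (π * ((m : ℕ) + (n : ℕ) + 1) / N)) :
    spectrum ℝ C =
      {x : ℝ | ∃ j : ℤ, |j| < (N : ℤ) ∧ j % 2 = ((N : ℤ) - 1) % 2 ∧ x = (j : ℝ)} := by
  ext x
  rw [spec_iff N hN C hC x]
  simp only [Set.mem_setOf_eq]
  constructor
  · rintro ⟨l, hl, rfl⟩
    refine ⟨(N:ℤ) - (2*l+1), ?_, ?_, by push_cast; ring⟩
    · rw [abs_lt]
      constructor <;> [skip; skip] <;> push_cast <;> omega
    · omega
  · rintro ⟨j, hj1, hj2, rfl⟩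
    rw [abs_lt] at hj1
    obtain ⟨k, hk, hk0, hkN⟩ : ∃ k : ℤ, (N:ℤ) - 1 - j = 2*k ∧ 0 ≤ k ∧ k < N := by
      refine ⟨((N:ℤ) - 1 - j)/2, ?_, ?_, ?_⟩ <;> omega
    refine ⟨k.toNat, by omega, ?_⟩
    have hj : (j:ℤ) = (N:ℤ) - (2*k.toNat + 1) := by omega
    rw [show ((j:ℤ):ℝ) = (((N:ℤ) - (2*(k.toNat:ℤ) + 1) : ℤ) : ℝ) from by exact_mod_cast congrArg (fun z : ℤ => (z:ℝ)) hj]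
    push_cast
    ring
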